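/- Let λ > 0, ν ∈ (0,1), μ > 0, and let (q_r)_{r≥1} be nonnegative reals with Σ_{r≥1} q_r = 1. Define the power series G(z) = Σ_{r≥1} q_r z^r with radius of convergence R, and the entire function F(z) = Σ_{k≥0} (λz)^k/(k!)^ν. If exp(μ G(z)) = F(z) for all complex z with |z| < R, then R = ∞, i.e., G is an entire function. -/

import Mathlib

open scoped ENNReal NNReal
open Filter

/-- The radius of convergence of the power series `Σ_k a_k z^k`: the supremum of `|z|`
over those `z` at which the series converges. -/
noncomputable def radiusOfConv (a : ℕ → ℂ) : ℝ≥0∞ :=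
  ⨆ (z : ℂ) (_ : Summable fun k => a k * z ^ k), (‖z‖₊ : ℝ≥0∞)

/-- Auxiliary: `Σ (λ s)^k / (k!)^ν` converges for `s > 0`, `λ > 0`, `ν > 0`. -/
lemma sumF_summable (lam nu s : ℝ) (hlam : 0 < lam) (hnu : 0 < nu) (hs : 0 < s) :
    Summable (fun k : ℕ => lam ^ k * s ^ k / ((k.factorial : ℝ)) ^ nu) := by
  have hpos : ∀ k : ℕ, 0 < lam ^ k * s ^ k / ((k.factorial : ℝ)) ^ nu := by
    intro k
    have h1 : (0:ℝ) < (k.factorial : ℝ) ^ nu :=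
      Real.rpow_pos_of_pos (by exact_mod_cast k.factorial_pos) _
    positivity
  apply summable_of_ratio_test_tendsto_lt_one (l := 0) one_pos
  · exact Filter.Eventually.of_forall fun k => (hpos k).ne'
  · have key : ∀ k : ℕ, ‖lam ^ (k+1) * s ^ (k+1) / ((k+1).factorial : ℝ) ^ nu‖ /
        ‖lam ^ k * s ^ k / ((k.factorial : ℝ)) ^ nu‖ = lam * s / ((k+1 : ℝ)) ^ nu := by
      intro k
      rw [Real.norm_of_nonneg (hpos _).le, Real.norm_of_nonneg (hpos k).le]
      have hfk : (0:ℝ) < (k.factorial : ℝ) := by exact_mod_cast k.factorial_pos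
      have hfact : ((k+1).factorial : ℝ) = (k+1 : ℝ) * (k.factorial : ℝ) := by
        push_cast [Nat.factorial_succ]; ring
      have hk1 : (0:ℝ) < (k+1 : ℝ) := by positivity
      rw [hfact, Real.mul_rpow hk1.le hfk.le]
      rw [pow_succ, pow_succ]
      field_simp
    simp_rw [key]
    apply Filter.Tendsto.div_atTop (tendsto_const_nhds)
    have h1 : Tendsto (fun k : ℕ => ((k : ℝ) + 1)) atTop atTop :=
      tendsto_natCast_atTop_atTop.atTop_add tendsto_const_nhds
    exact (tendsto_rpow_atTop hnu).comp h1

/-- Let `λ > 0`, `ν ∈ (0,1)`, `μ > 0`, and `(q_r)_{r ≥ 1}` nonnegative reals summing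
to `1`.  If `exp(μ · Σ_{r≥1} q_r z^r) = Σ_{k≥0} (λz)^k/(k!)^ν` for all complex `z`
with `|z|` less than the radius of convergence `R` of `G(z) = Σ_{r≥1} q_r z^r`, then
`R = ∞`, i.e. `G` is an entire function. -/
theorem radius_eq_top_of_exp_eq (lam nu μ : ℝ)
    (hlam : 0 < lam) (hnu : nu ∈ Set.Ioo (0 : ℝ) 1) (hμ : 0 < μ)
    (q : ℕ → ℝ) (hq0 : q 0 = 0) (hq : ∀ r, 0 ≤ q r) (hqsum : ∑' r, q r = 1)
    (heq : ∀ z : ℂ, (‖z‖₊ : ℝ≥0∞) < radiusOfConv (fun r => (q r : ℂ)) →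
      Complex.exp ((μ : ℂ) * ∑' r : ℕ, (q r : ℂ) * z ^ r)
        = ∑' k : ℕ, ((lam : ℂ) * z) ^ k / (((k.factorial : ℝ) ^ nu : ℝ) : ℂ)) :
    radiusOfConv (fun r => (q r : ℂ)) = ⊤ := by

  obtain ⟨hnu0, hnu1⟩ := hnu
  have hqs : Summable q := by
    by_contra h
    rw [tsum_eq_zero_of_not_summable h] at hqsum; norm_num at hqsum
  -- R ≥ 1
  have hR1 : 1 ≤ radiusOfConv (fun r => (q r : ℂ)) := by
    have hs1 : Summable fun k => (q k : ℂ) * (1:ℂ) ^ k := by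
      simpa using (Complex.summable_ofReal.mpr hqs)
    have := le_iSup₂ (f := fun (z:ℂ) (_ : Summable fun k => (q k:ℂ) * z ^ k) =>
      (‖z‖₊ : ℝ≥0∞)) (1:ℂ) hs1
    simpa [radiusOfConv] using this
  -- the inner power series
  set f : ℂ → ℂ := fun z => (μ:ℂ) * ∑' r, (q r:ℂ) * z ^ r with hf
  set cG : ℕ → ℂ := fun r => ((μ * q r : ℝ) : ℂ) with hcG
  set pG := FormalMultilinearSeries.ofScalars ℂ cG with hpG
  have hpGnorm : ∀ n, ‖pG n‖ = μ * q n := by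
    intro n
    rw [hpG, FormalMultilinearSeries.ofScalars_norm, hcG]
    rw [Complex.norm_real, Real.norm_of_nonneg (mul_nonneg hμ.le (hq n))]
  have hpGrad : 1 ≤ pG.radius := by
    have : Summable fun n => ‖pG n‖ * (1:ℝ) ^ n := by
      simp_rw [hpGnorm]
      simpa using (hqs.mul_left μ)
    simpa using pG.le_radius_of_summable (r := 1) this
  have hGsum : pG.sum = f := by
    funext z
    show (∑' n, pG n fun _ => z) = (μ:ℂ) * ∑' r, (q r:ℂ) * z ^ r
    rw [← tsum_mul_left]
    apply tsum_congr; intro n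
    rw [hpG, FormalMultilinearSeries.ofScalars_apply_eq]
    simp [hcG]; push_cast; ring
  have hGat : HasFPowerSeriesAt f pG 0 := by
    rw [← hGsum]
    exact (pG.hasFPowerSeriesOnBall (lt_of_lt_of_le one_pos hpGrad)).hasFPowerSeriesAt
  have hf0 : f 0 = 0 := by
    rw [hf]
    have : ∑' r : ℕ, (q r : ℂ) * (0:ℂ) ^ r = 0 := by
      rw [tsum_eq_single 0]
      · simp [hq0]
      · intro b hb; simp [zero_pow hb]
    simp [this]
  -- exponential series
  have hE : HasFPowerSeriesAt ((NormedSpace.exp : ℂ → ℂ)) (NormedSpace.expSeries ℂ ℂ) (f 0) := by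
    rw [hf0]; exact NormedSpace.exp_hasFPowerSeriesAt_zero (𝕂 := ℂ)
  have hcomp : HasFPowerSeriesAt ((NormedSpace.exp : ℂ → ℂ) ∘ f) ((NormedSpace.expSeries ℂ ℂ).comp pG) 0 :=
    hE.comp hGat
  -- the F series
  set cF : ℕ → ℂ := fun k => ((lam ^ k / (k.factorial:ℝ) ^ nu : ℝ) : ℂ) with hcF
  set pF := FormalMultilinearSeries.ofScalars ℂ cF with hpF
  have hfactpos : ∀ k : ℕ, (0:ℝ) < (k.factorial : ℝ) ^ nu := fun k =>
    Real.rpow_pos_of_pos (by exact_mod_cast k.factorial_pos) _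
  have hcFpos : ∀ k, (0:ℝ) < lam ^ k / (k.factorial:ℝ) ^ nu := by
    intro k; have := hfactpos k; positivity
  have hpFrad : 1 ≤ pF.radius := by
    have : Summable fun n => ‖pF n‖ * (1:ℝ) ^ n := by
      have := sumF_summable lam nu 1 hlam hnu0 one_pos
      simp only [one_pow, mul_one] at this ⊢
      convert this using 2 with n
      rw [hpF, FormalMultilinearSeries.ofScalars_norm, hcF]
      rw [Complex.norm_real, Real.norm_of_nonneg (hcFpos n).le]
    simpa using pF.le_radius_of_summable (r := 1) this
  have hFat : HasFPowerSeriesAt pF.sum pF 0 :=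
    (pF.hasFPowerSeriesOnBall (lt_of_lt_of_le one_pos hpFrad)).hasFPowerSeriesAt
  -- equality of functions near 0
  have hev : ((NormedSpace.exp : ℂ → ℂ) ∘ f) =ᶠ[nhds 0] pF.sum := by
    have hball : Metric.ball (0:ℂ) 1 ∈ nhds (0:ℂ) := Metric.ball_mem_nhds _ one_pos
    filter_upwards [hball] with z hz
    have hz1 : (‖z‖₊ : ℝ≥0∞) < radiusOfConv (fun r => (q r : ℂ)) := by
      refine lt_of_lt_of_le ?_ hR1
      simp only [Metric.mem_ball, dist_zero_right] at hz
      exact_mod_cast (by exact_mod_cast hz : ‖z‖₊ < (1:ℝ≥0))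
    have := heq z hz1
    rw [Function.comp_apply, ← Complex.exp_eq_exp_ℂ, hf]
    rw [this]
    rw [FormalMultilinearSeries.sum]
    apply tsum_congr; intro k
    rw [hpF, FormalMultilinearSeries.ofScalars_apply_eq, hcF]
    push_cast
    rw [mul_pow]
    rw [smul_eq_mul]
    ring
  have hseq : (NormedSpace.expSeries ℂ ℂ).comp pG = pF :=
    hcomp.eq_formalMultilinearSeries_of_eventually hFat hev
  -- coefficient inequality
  have key : ∀ n : ℕ, μ * q n ≤ lam ^ n / (n.factorial:ℝ) ^ nu := by
    intro n
    rcases Nat.eq_zero_or_pos n with h0 | hn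
    · rw [h0, hq0]; simpa using (hcFpos 0).le
    · have happ := congrFun hseq n
      have h1 : ((NormedSpace.expSeries ℂ ℂ).comp pG) n (fun _ => (1:ℂ)) = pF n (fun _ => (1:ℂ)) := by
        rw [happ]
      rw [FormalMultilinearSeries.comp, ContinuousMultilinearMap.sum_apply] at h1
      have hterm : ∀ c : Composition n,
          ((NormedSpace.expSeries ℂ ℂ).compAlongComposition pG c) (fun _ => (1:ℂ))
            = ((((c.length.factorial : ℝ))⁻¹ * ∏ i, (μ * q (c.blocksFun i)) : ℝ) : ℂ) := by
        intro c
        rw [FormalMultilinearSeries.compAlongComposition_apply]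
        have hac : pG.applyComposition c (fun _ => (1:ℂ))
            = fun i => ((μ * q (c.blocksFun i) : ℝ) : ℂ) := by
          funext i
          rw [FormalMultilinearSeries.applyComposition]
          rw [hpG]
          have : ((fun _ => (1:ℂ)) ∘ c.embedding i) = fun _ => (1:ℂ) := rfl
          rw [this, FormalMultilinearSeries.ofScalars_apply_eq]
          simp [hcG]
        rw [hac, NormedSpace.expSeries]
        simp only [ContinuousMultilinearMap.smul_apply,
          ContinuousMultilinearMap.mkPiAlgebraFin_apply, List.prod_ofFn]
        push_cast
        rw [smul_eq_mul]
      rw [Finset.sum_congr rfl (fun c _ => hterm c)] at h1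
      rw [hpF, FormalMultilinearSeries.ofScalars_apply_eq] at h1
      simp only [one_pow, smul_eq_mul, mul_one] at h1
      rw [← Complex.ofReal_sum] at h1
      simp only [hcF] at h1
      have hreal : ∑ c : Composition n,
          (((c.length.factorial : ℝ))⁻¹ * ∏ i, (μ * q (c.blocksFun i)))
            = lam ^ n / (n.factorial:ℝ) ^ nu := by
        exact_mod_cast h1
      have hnonneg : ∀ c : Composition n, (0:ℝ) ≤
          (((c.length.factorial : ℝ))⁻¹ * ∏ i, (μ * q (c.blocksFun i))) := by
        intro c
        apply mul_nonneg
        · positivity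
        · exact Finset.prod_nonneg fun i _ => mul_nonneg hμ.le (hq _)
      have hsingle : (((Composition.single n hn).length.factorial : ℝ))⁻¹
          * ∏ i, (μ * q ((Composition.single n hn).blocksFun i)) = μ * q n := by
        have hprod : ∏ i, (μ * q ((Composition.single n hn).blocksFun i))
            = (μ * q n) ^ (Composition.single n hn).length := by
          calc ∏ i, (μ * q ((Composition.single n hn).blocksFun i))
              = ∏ _i : Fin (Composition.single n hn).length, (μ * q n) :=
                Finset.prod_congr rfl fun i _ => by rw [Composition.single_blocksFun]
            _ = (μ * q n) ^ (Composition.single n hn).length := by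
                rw [Finset.prod_const, Finset.card_univ, Fintype.card_fin]
        rw [hprod, Composition.single_length]
        norm_num
      calc μ * q n = _ := hsingle.symm
        _ ≤ ∑ c : Composition n,
            (((c.length.factorial : ℝ))⁻¹ * ∏ i, (μ * q (c.blocksFun i))) :=
          Finset.single_le_sum (fun c _ => hnonneg c) (Finset.mem_univ _)
        _ = _ := hreal
  -- summability at every point
  have hsumz : ∀ z : ℂ, Summable fun k => (q k : ℂ) * z ^ k := by
    intro z
    apply Summable.of_norm
    have hb : ∀ k : ℕ, ‖(q k : ℂ) * z ^ k‖
        ≤ (lam ^ k * (‖z‖+1) ^ k / ((k.factorial:ℝ)) ^ nu) / μ := by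
      intro k
      rw [norm_mul, norm_pow, Complex.norm_real, Real.norm_of_nonneg (hq k)]
      have h1 : q k * ‖z‖ ^ k ≤ q k * (‖z‖+1) ^ k :=
        mul_le_mul_of_nonneg_left
          (pow_le_pow_left₀ (norm_nonneg z) (by linarith) k) (hq k)
      have h2 : q k ≤ (lam ^ k / (k.factorial:ℝ) ^ nu) / μ := by
        rw [le_div_iff₀ hμ, mul_comm]; exact key k
      have h3 : q k * (‖z‖+1) ^ k ≤ ((lam ^ k / (k.factorial:ℝ) ^ nu) / μ) * (‖z‖+1) ^ k :=
        mul_le_mul_of_nonneg_right h2 (by positivity)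
      calc q k * ‖z‖ ^ k ≤ ((lam ^ k / (k.factorial:ℝ) ^ nu) / μ) * (‖z‖+1) ^ k :=
            le_trans h1 h3
        _ = (lam ^ k * (‖z‖+1) ^ k / ((k.factorial:ℝ)) ^ nu) / μ := by ring
    apply Summable.of_nonneg_of_le (fun k => norm_nonneg _) hb
    exact (sumF_summable lam nu (‖z‖+1) hlam hnu0 (by positivity)).div_const μ
  -- conclusion
  by_contra hne
  obtain ⟨n, hn⟩ := ENNReal.exists_nat_gt hne
  have hle : (n : ℝ≥0∞) ≤ radiusOfConv (fun r => (q r : ℂ)) := by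
    have := le_iSup₂ (f := fun (z:ℂ) (_ : Summable fun k => (q k:ℂ) * z ^ k) =>
      (‖z‖₊ : ℝ≥0∞)) ((n:ℕ):ℂ) (hsumz _)
    have hnn : ((‖((n:ℕ):ℂ)‖₊ : ℝ≥0) : ℝ≥0∞) = (n : ℝ≥0∞) := by
      simp
    rw [hnn] at this
    simpa [radiusOfConv] using this
  exact (lt_irrefl _ (lt_of_lt_of_le hn hle)).elim
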